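/- Let ρ_F : ℂ \ {0,1} → ℂ satisfy the functional equation ρ_F(1-z) = (z ρ_F(z) - 1)/(z-1) for all z ≠ 0, 1. Suppose near z_0 = 1/2 the function has a convergent real-analytic expansion ρ_F(1/2 + z) = ∑_{i,j≥0} a_{i,j} z^i z̄^j. Then the functional equation implies ∑_{i,j≥0} a_{i,j}[1+(-1)^{i+j}] z^i z̄^j + 2∑_{i,j≥0} a_{i,j}[1-(-1)^{i+j}] z^{i+1} z̄^j - 2 = 0, and consequently a_{0,2n} = 0 for all n ≥ 1, and a_{i+1,j} = -2 a_{i,j} whenever i+j is odd. -/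

import Mathlib

open Complex

private lemma regroup_antidiag {α : Type*} [AddCommMonoid α] [TopologicalSpace α] [T3Space α]
    [ContinuousAdd α] (f : ℕ × ℕ → α) (S : α) (hf : HasSum f S) :
    HasSum (fun n => ∑ p ∈ Finset.HasAntidiagonal.antidiagonal n, f p) S := by
  refine (Finset.HasAntidiagonal.sigmaAntidiagonalEquivProd.hasSum_iff.mpr hf).sigma fun n => ?_
  simpa [Finset.sum_attach] using
    hasSum_fintype (fun q : Finset.HasAntidiagonal.antidiagonal n => f q.val)

private lemma psuniq (c : ℕ → ℂ) (δ : ℝ) (hδ : 0 < δ)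
    (hs : Summable fun n => ‖c n‖ * (δ / 2) ^ n)
    (h : ∀ x : ℝ, |x| < δ → HasSum (fun n => c n * (x : ℂ) ^ n) 0) :
    ∀ n, c n = 0 := by
  have hδ2 : (0 : ℝ) ≤ δ / 2 := by linarith
  set p : FormalMultilinearSeries ℝ ℝ ℂ :=
    fun n => ContinuousMultilinearMap.mkPiRing ℝ (Fin n) (c n) with hp
  have hrad : ENNReal.ofReal (δ / 2) ≤ p.radius := by
    refine p.le_radius_of_summable_norm (r := (δ / 2).toNNReal) ?_
    simp only [hp, ContinuousMultilinearMap.norm_mkPiRing,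
      Real.coe_toNNReal _ hδ2]
    exact hs
  have key : HasFPowerSeriesOnBall (fun _ : ℝ => (0 : ℂ)) p 0 (ENNReal.ofReal (δ / 2)) := by
    refine ⟨hrad, by simp [ENNReal.ofReal_pos]; linarith, ?_⟩
    intro y hy
    have hy' : |y| < δ / 2 := by
      have := hy
      rw [EMetric.mem_ball, edist_dist, Real.dist_eq, sub_zero,
        ENNReal.ofReal_lt_ofReal_iff (by linarith)] at this
      exact this
    have h0 := h y (by linarith)
    have hfg : (fun n => p n fun _ => y) = fun n => c n * (y : ℂ) ^ n := by
      funext n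
      simp only [hp, ContinuousMultilinearMap.mkPiRing_apply, Finset.prod_const,
        Finset.card_univ, Fintype.card_fin, Complex.real_smul]
      push_cast
      ring
    rw [hfg]
    simpa using h0
  have hp0 : p = 0 := by
    have h1 : HasFPowerSeriesAt (0 : ℝ → ℂ) p 0 := key.hasFPowerSeriesAt
    exact h1.eq_zero
  intro n
  have h2 : p n = 0 := by rw [hp0]; rfl
  have h3 := congrFun (congrArg DFunLike.coe h2) (fun _ => (1 : ℝ))
  simpa [hp, ContinuousMultilinearMap.mkPiRing_apply] using h3

private lemma coeff_zero (b : ℕ → ℕ → ℂ) (δ : ℝ) (hδ : 0 < δ)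
    (h : ∀ w : ℂ, ‖w‖ < δ →
      HasSum (fun p : ℕ × ℕ => b p.1 p.2 * w ^ p.1 * (starRingEnd ℂ) w ^ p.2) 0) :
    ∀ i j, b i j = 0 := by
  have hδ2 : (0 : ℝ) < δ / 2 := by linarith
  -- absolute summability at radius δ/2
  have habs : Summable (fun p : ℕ × ℕ => ‖b p.1 p.2‖ * (δ / 2) ^ (p.1 + p.2)) := by
    have h1 := (h ((δ / 2 : ℝ) : ℂ)
      (by rw [Complex.norm_real, Real.norm_eq_abs, abs_of_pos hδ2]; linarith)).summable
    have h2 := h1.norm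
    have hfg : (fun p : ℕ × ℕ => ‖b p.1 p.2 * ((δ / 2 : ℝ) : ℂ) ^ p.1 *
        (starRingEnd ℂ) ((δ / 2 : ℝ) : ℂ) ^ p.2‖) =
        fun p : ℕ × ℕ => ‖b p.1 p.2‖ * (δ / 2) ^ (p.1 + p.2) := by
      funext p
      rw [Complex.conj_ofReal]
      simp [norm_mul, norm_pow, Complex.norm_real, abs_of_pos hδ2, abs_of_pos hδ, pow_add]
      ring
    rwa [hfg] at h2
  have hd : Summable (fun n : ℕ =>
      (∑ p ∈ Finset.HasAntidiagonal.antidiagonal n, ‖b p.1 p.2‖) * (δ / 2) ^ n) := by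
    have h0 := (regroup_antidiag _ _ habs.hasSum).summable
    have hfg : (fun n : ℕ => ∑ p ∈ Finset.HasAntidiagonal.antidiagonal n,
        ‖b p.1 p.2‖ * (δ / 2) ^ (p.1 + p.2)) =
        fun n : ℕ => (∑ p ∈ Finset.HasAntidiagonal.antidiagonal n, ‖b p.1 p.2‖) * (δ / 2) ^ n := by
      funext n
      rw [Finset.sum_mul]
      refine Finset.sum_congr rfl fun p hp => ?_
      rw [Finset.HasAntidiagonal.mem_antidiagonal] at hp
      rw [hp]
    rwa [hfg] at h0
  -- circle coefficients vanish
  have hcirc : ∀ (n : ℕ) (u : ℂ), ‖u‖ = 1 →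
      (∑ p ∈ Finset.HasAntidiagonal.antidiagonal n, b p.1 p.2 * u ^ p.1 * (starRingEnd ℂ) u ^ p.2) = 0 := by
    intro n u hu
    set c : ℕ → ℂ := fun m => ∑ p ∈ Finset.HasAntidiagonal.antidiagonal m,
      b p.1 p.2 * u ^ p.1 * (starRingEnd ℂ) u ^ p.2 with hc
    have hcs : Summable fun m => ‖c m‖ * (δ / 2) ^ m := by
      refine Summable.of_nonneg_of_le (fun m => by positivity) (fun m => ?_) hd
      have hb : ‖c m‖ ≤ ∑ p ∈ Finset.HasAntidiagonal.antidiagonal m, ‖b p.1 p.2‖ := by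
        refine (norm_sum_le _ _).trans (le_of_eq ?_)
        refine Finset.sum_congr rfl fun p _ => ?_
        simp [norm_mul, norm_pow, hu, RCLike.norm_conj]
      exact mul_le_mul_of_nonneg_right hb (by positivity)
    have hx : ∀ x : ℝ, |x| < δ → HasSum (fun m => c m * (x : ℂ) ^ m) 0 := by
      intro x hxδ
      have hw : ‖(x : ℂ) * u‖ < δ := by
        rw [norm_mul, Complex.norm_real, hu, mul_one]; exact hxδ
      have h1 := h ((x : ℂ) * u) hw
      have h2 : HasSum (fun p : ℕ × ℕ =>
          b p.1 p.2 * u ^ p.1 * (starRingEnd ℂ) u ^ p.2 * (x : ℂ) ^ (p.1 + p.2)) 0 := by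
        have hfg : (fun p : ℕ × ℕ => b p.1 p.2 * ((x : ℂ) * u) ^ p.1 *
            (starRingEnd ℂ) ((x : ℂ) * u) ^ p.2) =
            fun p : ℕ × ℕ => b p.1 p.2 * u ^ p.1 * (starRingEnd ℂ) u ^ p.2 *
              (x : ℂ) ^ (p.1 + p.2) := by
          funext p
          rw [map_mul, Complex.conj_ofReal, mul_pow, mul_pow, pow_add]
          ring
        rwa [hfg] at h1
      have h3 := regroup_antidiag _ _ h2
      have hfg2 : (fun m : ℕ => ∑ p ∈ Finset.HasAntidiagonal.antidiagonal m,
          b p.1 p.2 * u ^ p.1 * (starRingEnd ℂ) u ^ p.2 * (x : ℂ) ^ (p.1 + p.2)) =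
          fun m : ℕ => c m * (x : ℂ) ^ m := by
        funext m
        rw [hc, Finset.sum_mul]
        refine Finset.sum_congr rfl fun p hp => ?_
        rw [Finset.HasAntidiagonal.mem_antidiagonal] at hp
        rw [hp]
      rwa [hfg2] at h3
    exact psuniq c δ hδ hcs hx n
  -- polynomial step
  intro i j
  set n := i + j with hn
  set Q : Polynomial ℂ := ∑ p ∈ Finset.HasAntidiagonal.antidiagonal n,
    Polynomial.C (b p.1 p.2) * Polynomial.X ^ (2 * p.1) with hQ
  have hroot : ∀ u : ℂ, ‖u‖ = 1 → Q.IsRoot u := by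
    intro u hu
    have hu0 : u ≠ 0 := by
      intro h0; rw [h0] at hu; simp at hu
    have hconj : (starRingEnd ℂ) u = u⁻¹ := by
      refine eq_inv_of_mul_eq_one_right ?_
      rw [Complex.mul_conj]
      rw [Complex.normSq_eq_norm_sq]
      rw [hu]
      norm_num
    have h0 := hcirc n u hu
    unfold Polynomial.IsRoot
    rw [hQ, Polynomial.eval_finset_sum]
    simp only [Polynomial.eval_mul, Polynomial.eval_pow, Polynomial.eval_C, Polynomial.eval_X]
    have hterm : ∀ p ∈ Finset.HasAntidiagonal.antidiagonal n, b p.1 p.2 * u ^ (2 * p.1) =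
        u ^ n * (b p.1 p.2 * u ^ p.1 * (starRingEnd ℂ) u ^ p.2) := by
      intro p hp
      rw [Finset.HasAntidiagonal.mem_antidiagonal] at hp
      rw [hconj, inv_pow, ← hp]
      field_simp
      ring
    rw [Finset.sum_congr rfl hterm, ← Finset.mul_sum, h0, mul_zero]
  have hQ0 : Q = 0 := by
    refine Polynomial.eq_zero_of_infinite_isRoot Q ?_
    have hinj : Set.InjOn (fun t : ℝ => Complex.exp ((t : ℂ) * Complex.I)) (Set.Ioo 0 1) := by
      intro s hs t ht hst
      simp only at hst
      rw [Complex.exp_eq_exp_iff_exists_int] at hst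
      obtain ⟨k, hk⟩ := hst
      have h1 : (s : ℂ) * Complex.I = ((t : ℝ) + (k : ℝ) * (2 * Real.pi) : ℝ) * Complex.I := by
        rw [hk]; push_cast; ring
      have h2 : (s : ℂ) = ((t + (k : ℝ) * (2 * Real.pi) : ℝ) : ℂ) :=
        mul_right_cancel₀ Complex.I_ne_zero h1
      have h3 : s = t + (k : ℝ) * (2 * Real.pi) := by exact_mod_cast h2
      have hk0 : k = 0 := by
        by_contra hk0
        have hk1 : (1 : ℝ) ≤ |(k : ℝ)| := by
          have := Int.one_le_abs hk0
          calc (1:ℝ) = ((1:ℤ) : ℝ) := by norm_num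
            _ ≤ ((|k| : ℤ) : ℝ) := by exact_mod_cast this
            _ = |(k : ℝ)| := by push_cast; ring
        have habs : |s - t| < 1 := by
          rw [abs_sub_lt_iff]
          constructor <;> [linarith [hs.1, hs.2, ht.1, ht.2]; linarith [hs.1, hs.2, ht.1, ht.2]]
        have h4 : s - t = (k : ℝ) * (2 * Real.pi) := by linarith
        have h5 : |s - t| = |(k : ℝ)| * (2 * Real.pi) := by
          rw [h4, abs_mul, abs_of_pos (by positivity : (0:ℝ) < 2 * Real.pi)]
        nlinarith [Real.pi_gt_three]
      rw [hk0] at h3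
      simpa using h3
    have himg := (Set.Ioo_infinite (by norm_num : (0:ℝ) < 1)).image hinj
    refine himg.mono ?_
    rintro _ ⟨t, _, rfl⟩
    apply hroot
    rw [Complex.norm_exp]
    simp
  have hco : Q.coeff (2 * i) = b i j := by
    rw [hQ, Polynomial.finset_sum_coeff]
    rw [Finset.sum_eq_single (i, j)]
    · simp [Polynomial.coeff_C_mul, Polynomial.coeff_X_pow]
    · intro p hp hne
      rw [Finset.HasAntidiagonal.mem_antidiagonal] at hp
      have h2 : ¬(2 * i = 2 * p.1) := by
        intro hh
        apply hne
        have hp1 : p.1 = i := by omega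
        have hp2 : p.2 = j := by omega
        exact Prod.ext hp1 hp2
      simp [Polynomial.coeff_C_mul, Polynomial.coeff_X_pow, h2]
    · intro hmem
      exact absurd (Finset.HasAntidiagonal.mem_antidiagonal.mpr hn.symm) hmem
  rw [hQ0, Polynomial.coeff_zero] at hco
  exact hco.symm

set_option maxHeartbeats 1000000 in
/-- Consequences of the symmetry `ρ_F(1-z) = (zρ_F(z)-1)/(z-1)` for the local
real-analytic expansion `ρ_F(1/2+z) = ∑_{i,j} a_{i,j} zⁱ z̄ʲ` around `z₀ = 1/2`:
the identity `∑ a_{i,j}[1+(-1)^{i+j}] zⁱ z̄ʲ + 2∑ a_{i,j}[1-(-1)^{i+j}] z^{i+1} z̄ʲ - 2 = 0`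
holds, and consequently `a_{0,2n} = 0` for `n ≥ 1` and `a_{i+1,j} = -2 a_{i,j}`
whenever `i+j` is odd. -/
theorem accessory_parameter_expansion_symmetry
    (ρF : ℂ → ℂ) (a : ℕ → ℕ → ℂ) (r : ℝ) (hr : 0 < r)
    (hfe : ∀ z : ℂ, z ≠ 0 → z ≠ 1 → ρF (1 - z) = (z * ρF z - 1) / (z - 1))
    (hexp : ∀ z : ℂ, ‖z‖ < r →
      HasSum (fun p : ℕ × ℕ => a p.1 p.2 * z ^ p.1 * (starRingEnd ℂ z) ^ p.2)
        (ρF (1 / 2 + z))) :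
    (∀ z : ℂ, ‖z‖ < r →
      HasSum (fun p : ℕ × ℕ =>
          a p.1 p.2 * (1 + (-1 : ℂ) ^ (p.1 + p.2)) * z ^ p.1 * (starRingEnd ℂ z) ^ p.2 +
            2 * a p.1 p.2 * (1 - (-1 : ℂ) ^ (p.1 + p.2)) * z ^ (p.1 + 1) *
              (starRingEnd ℂ z) ^ p.2) 2) ∧
    (∀ n : ℕ, 1 ≤ n → a 0 (2 * n) = 0) ∧
    (∀ i j : ℕ, Odd (i + j) → a (i + 1) j = -2 * a i j) := by
  classical
  have hAB : ∀ z : ℂ, ‖z‖ < r →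
      HasSum (fun p : ℕ × ℕ => a p.1 p.2 * (-1 : ℂ) ^ (p.1 + p.2) * z ^ p.1 *
        (starRingEnd ℂ z) ^ p.2) (ρF (1 / 2 - z)) := by
    intro z hz
    have h1 := hexp (-z) (by simpa using hz)
    rw [show (1 : ℂ) / 2 + -z = 1 / 2 - z by ring] at h1
    have hfg : (fun p : ℕ × ℕ => a p.1 p.2 * (-z) ^ p.1 * (starRingEnd ℂ (-z)) ^ p.2) =
        fun p : ℕ × ℕ => a p.1 p.2 * (-1 : ℂ) ^ (p.1 + p.2) * z ^ p.1 *
          (starRingEnd ℂ z) ^ p.2 := by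
      funext p
      rw [map_neg, neg_pow, neg_pow, pow_add]
      ring
    rwa [hfg] at h1
  set δ := min r (1 / 2 : ℝ) with hδdef
  have hδpos : 0 < δ := lt_min hr (by norm_num)
  have hδr : δ ≤ r := min_le_left _ _
  have hhalf : ‖(1 / 2 : ℂ)‖ = 1 / 2 := by
    rw [norm_div, norm_one, Complex.norm_ofNat]
  -- key algebraic identity from the functional equation
  have hkey : ∀ z : ℂ, ‖z‖ < δ →
      ρF (1 / 2 + z) + ρF (1 / 2 - z) + 2 * z * (ρF (1 / 2 + z) - ρF (1 / 2 - z)) = 2 := by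
    intro z hz
    have hz2 : ‖z‖ < 1 / 2 := lt_of_lt_of_le hz (min_le_right _ _)
    have h0 : (1 / 2 + z : ℂ) ≠ 0 := by
      intro hh
      have hz' : z = -(1 / 2 : ℂ) := by linear_combination hh
      rw [hz', norm_neg, hhalf] at hz2
      linarith
    have h1 : (1 / 2 + z : ℂ) ≠ 1 := by
      intro hh
      have hz' : z = (1 / 2 : ℂ) := by linear_combination hh
      rw [hz', hhalf] at hz2
      linarith
    have hden : (1 / 2 + z : ℂ) - 1 ≠ 0 := by
      intro hh; exact h1 (by linear_combination hh)
    have hfe' := hfe (1 / 2 + z) h0 h1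
    rw [show (1 : ℂ) - (1 / 2 + z) = 1 / 2 - z by ring] at hfe'
    have hfe2 : ρF (1 / 2 - z) * ((1 / 2 + z) - 1) = (1 / 2 + z) * ρF (1 / 2 + z) - 1 := by
      rw [hfe']
      exact div_mul_cancel₀ _ hden
    linear_combination (-2 : ℂ) * hfe2
  -- the summed identity, on the small disk, in separated form
  have hb0 : ∀ w : ℂ, ‖w‖ < δ →
      HasSum (fun p : ℕ × ℕ =>
        (a p.1 p.2 * (1 + (-1 : ℂ) ^ (p.1 + p.2)) +
          (if p.1 = 0 then 0 else
            2 * a (p.1 - 1) p.2 * (1 - (-1 : ℂ) ^ ((p.1 - 1) + p.2))) -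
          (if p.1 = 0 ∧ p.2 = 0 then 2 else 0)) * w ^ p.1 * (starRingEnd ℂ) w ^ p.2) 0 := by
    intro w hw
    have hA := hexp w (lt_of_lt_of_le hw hδr)
    have hB := hAB w (lt_of_lt_of_le hw hδr)
    have h1 : HasSum (fun p : ℕ × ℕ => a p.1 p.2 * (1 + (-1 : ℂ) ^ (p.1 + p.2)) * w ^ p.1 *
        (starRingEnd ℂ) w ^ p.2) (ρF (1 / 2 + w) + ρF (1 / 2 - w)) := by
      have := hA.add hB
      have hfg : (fun p : ℕ × ℕ => a p.1 p.2 * w ^ p.1 * (starRingEnd ℂ w) ^ p.2 +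
          a p.1 p.2 * (-1 : ℂ) ^ (p.1 + p.2) * w ^ p.1 * (starRingEnd ℂ w) ^ p.2) =
          fun p : ℕ × ℕ => a p.1 p.2 * (1 + (-1 : ℂ) ^ (p.1 + p.2)) * w ^ p.1 *
            (starRingEnd ℂ) w ^ p.2 := by
        funext p; ring
      rwa [hfg] at this
    have h2 : HasSum (fun p : ℕ × ℕ => 2 * a p.1 p.2 * (1 - (-1 : ℂ) ^ (p.1 + p.2)) *
        w ^ (p.1 + 1) * (starRingEnd ℂ) w ^ p.2)
        (2 * w * (ρF (1 / 2 + w) - ρF (1 / 2 - w))) := by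
      have := (hA.sub hB).mul_left (2 * w)
      have hfg : (fun p : ℕ × ℕ => 2 * w * (a p.1 p.2 * w ^ p.1 * (starRingEnd ℂ w) ^ p.2 -
          a p.1 p.2 * (-1 : ℂ) ^ (p.1 + p.2) * w ^ p.1 * (starRingEnd ℂ w) ^ p.2)) =
          fun p : ℕ × ℕ => 2 * a p.1 p.2 * (1 - (-1 : ℂ) ^ (p.1 + p.2)) * w ^ (p.1 + 1) *
            (starRingEnd ℂ) w ^ p.2 := by
        funext p; rw [pow_succ]; ring
      rwa [hfg] at this
    have hinj : Function.Injective (fun p : ℕ × ℕ => (p.1 + 1, p.2)) := by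
      intro p q hpq
      simp only [Prod.mk.injEq] at hpq
      exact Prod.ext (by omega) hpq.2
    have h2' : HasSum (fun q : ℕ × ℕ => if q.1 = 0 then 0 else
        2 * a (q.1 - 1) q.2 * (1 - (-1 : ℂ) ^ ((q.1 - 1) + q.2)) * w ^ q.1 *
          (starRingEnd ℂ) w ^ q.2) (2 * w * (ρF (1 / 2 + w) - ρF (1 / 2 - w))) := by
      rw [← Function.Injective.hasSum_iff hinj ?_]
      · have hfg : ((fun q : ℕ × ℕ => if q.1 = 0 then 0 else
            2 * a (q.1 - 1) q.2 * (1 - (-1 : ℂ) ^ ((q.1 - 1) + q.2)) * w ^ q.1 *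
              (starRingEnd ℂ) w ^ q.2) ∘ fun p : ℕ × ℕ => (p.1 + 1, p.2)) =
            fun p : ℕ × ℕ => 2 * a p.1 p.2 * (1 - (-1 : ℂ) ^ (p.1 + p.2)) * w ^ (p.1 + 1) *
              (starRingEnd ℂ) w ^ p.2 := by
          funext p
          simp only [Function.comp_apply, Nat.add_sub_cancel, Nat.succ_ne_zero, if_false]
        rwa [hfg]
      · intro q hq
        have hq1 : q.1 = 0 := by
          by_contra hq1
          exact hq ⟨(q.1 - 1, q.2), by simp [Prod.ext_iff]; omega⟩
        simp [hq1]
    have h3 : HasSum (fun q : ℕ × ℕ => if q.1 = 0 ∧ q.2 = 0 then (2 : ℂ) else 0) 2 := by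
      have := hasSum_ite_eq ((0, 0) : ℕ × ℕ) (2 : ℂ)
      have hfg : (fun q : ℕ × ℕ => if q = (0, 0) then (2 : ℂ) else 0) =
          fun q : ℕ × ℕ => if q.1 = 0 ∧ q.2 = 0 then (2 : ℂ) else 0 := by
        funext q; congr 1; simp [Prod.ext_iff]
      rwa [hfg] at this
    have htot := (h1.add h2').sub h3
    rw [show ρF (1 / 2 + w) + ρF (1 / 2 - w) + 2 * w * (ρF (1 / 2 + w) - ρF (1 / 2 - w)) - 2
      = 0 by rw [hkey w hw]; ring] at htot
    have hfg : (fun q : ℕ × ℕ => (a q.1 q.2 * (1 + (-1 : ℂ) ^ (q.1 + q.2)) * w ^ q.1 *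
        (starRingEnd ℂ) w ^ q.2 + (if q.1 = 0 then 0 else
          2 * a (q.1 - 1) q.2 * (1 - (-1 : ℂ) ^ ((q.1 - 1) + q.2)) * w ^ q.1 *
            (starRingEnd ℂ) w ^ q.2)) - (if q.1 = 0 ∧ q.2 = 0 then (2 : ℂ) else 0)) =
        fun p : ℕ × ℕ => (a p.1 p.2 * (1 + (-1 : ℂ) ^ (p.1 + p.2)) +
          (if p.1 = 0 then 0 else
            2 * a (p.1 - 1) p.2 * (1 - (-1 : ℂ) ^ ((p.1 - 1) + p.2))) -
          (if p.1 = 0 ∧ p.2 = 0 then 2 else 0)) * w ^ p.1 * (starRingEnd ℂ) w ^ p.2 := by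
      funext q
      rcases q with ⟨q1, q2⟩
      by_cases hq1 : q1 = 0 <;> by_cases hq2 : q2 = 0 <;>
        simp [hq1, hq2] <;> ring
    rwa [hfg] at htot
  have hbz := coeff_zero (fun i j => a i j * (1 + (-1 : ℂ) ^ (i + j)) +
      (if i = 0 then 0 else 2 * a (i - 1) j * (1 - (-1 : ℂ) ^ ((i - 1) + j))) -
      (if i = 0 ∧ j = 0 then 2 else 0)) δ hδpos hb0
  -- extract the coefficient relations
  have ha00 : a 0 0 = 1 := by
    have := hbz 0 0
    simp at this
    linear_combination this / 2
  have hc2 : ∀ n : ℕ, 1 ≤ n → a 0 (2 * n) = 0 := by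
    intro n hn
    have := hbz 0 (2 * n)
    have hne : ¬(2 * n = 0) := by omega
    simp [hne, pow_mul] at this
    exact this
  have hc3 : ∀ i j : ℕ, Odd (i + j) → a (i + 1) j = -2 * a i j := by
    intro i j hodd
    have := hbz (i + 1) j
    have he : (-1 : ℂ) ^ (i + 1 + j) = 1 := Even.neg_one_pow (by
      rcases hodd with ⟨m, hm⟩; exact ⟨m + 1, by omega⟩)
    have ho : (-1 : ℂ) ^ (i + j) = -1 := Odd.neg_one_pow hodd
    simp only [Nat.succ_ne_zero, if_false, Nat.add_sub_cancel, false_and, if_false,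
      sub_zero] at this
    rw [he, ho] at this
    linear_combination this / 2
  refine ⟨?_, hc2, hc3⟩
  -- the full-disk identity
  intro z hz
  have hA := hexp z hz
  have hB := hAB z hz
  set G : ℕ × ℕ → ℂ := fun q => a q.1 q.2 * (1 + (-1 : ℂ) ^ (q.1 + q.2)) * z ^ q.1 *
    (starRingEnd ℂ z) ^ q.2 with hG
  have hGsum : HasSum G (ρF (1 / 2 + z) + ρF (1 / 2 - z)) := by
    have := hA.add hB
    have hfg : (fun p : ℕ × ℕ => a p.1 p.2 * z ^ p.1 * (starRingEnd ℂ z) ^ p.2 +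
        a p.1 p.2 * (-1 : ℂ) ^ (p.1 + p.2) * z ^ p.1 * (starRingEnd ℂ z) ^ p.2) = G := by
      funext p; rw [hG]; ring
    rwa [hfg] at this
  set G0 : ℕ × ℕ → ℂ := fun q => if q.1 = 0 then G q else 0 with hG0
  have hG0sum : HasSum G0 2 := by
    have hg0 : Function.Injective (fun j : ℕ => ((0, j) : ℕ × ℕ)) := by
      intro x y hxy; simpa [Prod.ext_iff] using hxy
    rw [← Function.Injective.hasSum_iff hg0 ?_]
    · have hfg : (G0 ∘ fun j : ℕ => ((0, j) : ℕ × ℕ)) = fun j : ℕ => G (0, j) := by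
        funext j; simp [hG0]
      rw [hfg]
      have hsingle : ∀ j : ℕ, j ≠ 0 → G (0, j) = 0 := by
        intro j hj
        rcases Nat.even_or_odd j with hev | hod
        · obtain ⟨m, hm⟩ := hev
          have hm' : j = 2 * m := by omega
          have hm1 : 1 ≤ m := by omega
          simp [hG, hm', hc2 m hm1]
        · have h1 : (-1 : ℂ) ^ j = -1 := hod.neg_one_pow
          simp [hG, h1]
      have hss : HasSum (fun j : ℕ => G (0, j)) (G (0, 0)) :=
        hasSum_single (f := fun j : ℕ => G (0, j)) 0 hsingle
      have hval : G (0, 0) = 2 := by norm_num [hG, ha00]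
      rwa [hval] at hss
    · intro q hq
      have hq1 : ¬q.1 = 0 := by
        intro hq1
        exact hq ⟨q.2, by simp [Prod.ext_iff, hq1.symm]⟩
      simp [hG0, hq1]
  have hGplus : HasSum (fun q : ℕ × ℕ => if q.1 = 0 then 0 else G q)
      (ρF (1 / 2 + z) + ρF (1 / 2 - z) - 2) := by
    have := hGsum.sub hG0sum
    have hfg : (fun q : ℕ × ℕ => G q - G0 q) = fun q : ℕ × ℕ => if q.1 = 0 then 0 else G q := by
      funext q; by_cases hq : q.1 = 0 <;> simp [hG0, hq]
    rwa [hfg] at this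
  have hinj : Function.Injective (fun p : ℕ × ℕ => (p.1 + 1, p.2)) := by
    intro p q hpq
    simp only [Prod.mk.injEq] at hpq
    exact Prod.ext (by omega) hpq.2
  have hGe : HasSum (fun p : ℕ × ℕ => G (p.1 + 1, p.2))
      (ρF (1 / 2 + z) + ρF (1 / 2 - z) - 2) := by
    have hvan : ∀ q : ℕ × ℕ, q ∉ Set.range (fun p : ℕ × ℕ => (p.1 + 1, p.2)) →
        (if q.1 = 0 then 0 else G q) = 0 := by
      intro q hq
      have hq1 : q.1 = 0 := by
        by_contra hq1
        exact hq ⟨(q.1 - 1, q.2), by simp [Prod.ext_iff]; omega⟩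
      simp [hq1]
    have := (Function.Injective.hasSum_iff hinj hvan).mpr hGplus
    have hfg : ((fun q : ℕ × ℕ => if q.1 = 0 then 0 else G q) ∘
        fun p : ℕ × ℕ => (p.1 + 1, p.2)) = fun p : ℕ × ℕ => G (p.1 + 1, p.2) := by
      funext p; simp
    rwa [hfg] at this
  have hfinal := hGsum.sub hGe
  rw [show ρF (1 / 2 + z) + ρF (1 / 2 - z) -
    (ρF (1 / 2 + z) + ρF (1 / 2 - z) - 2) = 2 by ring] at hfinal
  have hfg : (fun p : ℕ × ℕ => G p - G (p.1 + 1, p.2)) = fun p : ℕ × ℕ =>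
      a p.1 p.2 * (1 + (-1 : ℂ) ^ (p.1 + p.2)) * z ^ p.1 * (starRingEnd ℂ z) ^ p.2 +
        2 * a p.1 p.2 * (1 - (-1 : ℂ) ^ (p.1 + p.2)) * z ^ (p.1 + 1) *
          (starRingEnd ℂ z) ^ p.2 := by
    funext p
    rcases Nat.even_or_odd (p.1 + p.2) with hev | hod
    · have he1 : (-1 : ℂ) ^ (p.1 + p.2) = 1 := hev.neg_one_pow
      have he2 : (-1 : ℂ) ^ (p.1 + 1 + p.2) = -1 := Odd.neg_one_pow (by
        rcases hev with ⟨m, hm⟩; exact ⟨m, by omega⟩)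
      simp only [hG, he1, he2]
      ring
    · have he1 : (-1 : ℂ) ^ (p.1 + p.2) = -1 := hod.neg_one_pow
      have he2 : (-1 : ℂ) ^ (p.1 + 1 + p.2) = 1 := Even.neg_one_pow (by
        rcases hod with ⟨m, hm⟩; exact ⟨m + 1, by omega⟩)
      have he3 : a (p.1 + 1) p.2 = -2 * a p.1 p.2 := hc3 p.1 p.2 hod
      simp only [hG, he1, he2, he3]
      ring
  rwa [hfg] at hfinal
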